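/- If ν(B̄(x, r)) ≤ β for every x ∈ ℝ^D and μ(B̄(y, r)) ≤ β for every y ∈ ℝ^D, where B̄(x, r) is the closed Euclidean ball of radius r centered at x, then for every t > 0 the cross-edge count satisfies P( Z ≥ 2( β n₁ n₂ + t·√(β n₁ n₂) + t·β·√(n₁ n₂ (n₁+n₂)) ) ) ≤ 1/t². -/

import Mathlib

open MeasureTheory ProbabilityTheory

lemma map_pair_apply_aux {Ω α β : Type*} [MeasurableSpace Ω] [MeasurableSpace α]
    [MeasurableSpace β] {P : Measure Ω} [IsFiniteMeasure P] {f : Ω → α} {g : Ω → β}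
    (hf : Measurable f) (hg : Measurable g) (hfg : IndepFun f g P)
    {S : Set (α × β)} (hS : MeasurableSet S) :
    P ((fun ω => (f ω, g ω)) ⁻¹' S) = ((P.map f).prod (P.map g)) S := by
  rw [← (indepFun_iff_map_prod_eq_prod_map_map hf.aemeasurable hg.aemeasurable).1 hfg,
    Measure.map_apply (hf.prodMk hg) hS]

theorem cross_edge_chebyshev_bound
    {Ω' : Type*} [MeasurableSpace Ω'] (P : Measure Ω') [IsProbabilityMeasure P]
    (n₁ n₂ D : ℕ) (hn₁ : 1 ≤ n₁) (hn₂ : 1 ≤ n₂) (hD : 1 ≤ D)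
    (r β : ℝ) (hr : 0 < r) (hβ : 0 ≤ β)
    (μ ν : Measure (EuclideanSpace ℝ (Fin D)))
    (X : Fin n₁ → Ω' → EuclideanSpace ℝ (Fin D))
    (Y : Fin n₂ → Ω' → EuclideanSpace ℝ (Fin D))
    (hXmeas : ∀ i, Measurable (X i)) (hYmeas : ∀ j, Measurable (Y j))
    (hindep : iIndepFun (β := fun _ : Fin n₁ ⊕ Fin n₂ => EuclideanSpace ℝ (Fin D))
      (Sum.elim X Y) P)
    (hX : ∀ i, Measure.map (X i) P = μ)
    (hY : ∀ j, Measure.map (Y j) P = ν)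
    (Z : Ω' → ℝ)
    (hZ : ∀ ω, Z ω = ∑ i, ∑ j, if ‖X i ω - Y j ω‖ ≤ r then (1:ℝ) else 0)
    (hν : ∀ x : EuclideanSpace ℝ (Fin D),
      ν (Metric.closedBall x r) ≤ ENNReal.ofReal β)
    (hμ : ∀ y : EuclideanSpace ℝ (Fin D),
      μ (Metric.closedBall y r) ≤ ENNReal.ofReal β)
    (t : ℝ) (ht : 0 < t) :
    P {ω | Z ω ≥ 2 * (β * n₁ * n₂ + t * Real.sqrt (β * n₁ * n₂)
        + t * β * Real.sqrt (n₁ * n₂ * (n₁ + n₂)))}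
      ≤ ENNReal.ofReal (1 / t^2) := by
  classical
  have hWmeas : ∀ k : Fin n₁ ⊕ Fin n₂, Measurable (Sum.elim X Y k) := by
    rintro (i | j)
    exacts [hXmeas i, hYmeas j]
  have hνprob : IsProbabilityMeasure ν := by
    rw [← hY ⟨0, hn₂⟩]; exact Measure.isProbabilityMeasure_map (hYmeas _).aemeasurable
  have hμprob : IsProbabilityMeasure μ := by
    rw [← hX ⟨0, hn₁⟩]; exact Measure.isProbabilityMeasure_map (hXmeas _).aemeasurable
  -- β must be positive
  have hβpos : 0 < β := by
    rcases lt_or_ge 0 β with h | h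
    · exact h
    · exfalso
      have hzero : ∀ x, ν (Metric.closedBall x r) = 0 := fun x =>
        le_antisymm (by simpa [ENNReal.ofReal_eq_zero.2 h] using hν x) zero_le
      obtain ⟨s, hsc, hsd⟩ :=
        TopologicalSpace.exists_countable_dense (EuclideanSpace ℝ (Fin D))
      have hcover : (Set.univ : Set (EuclideanSpace ℝ (Fin D)))
          ⊆ ⋃ x ∈ s, Metric.closedBall x r := by
        intro y _
        obtain ⟨x, hxs, hxy⟩ := Metric.mem_closure_iff.1 (hsd y) r hr
        exact Set.mem_biUnion hxs (Metric.mem_closedBall.2 hxy.le)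
      have h0 : ν Set.univ = 0 :=
        measure_mono_null hcover
          ((measure_biUnion_null_iff hsc).2 fun x _ => hzero x)
      simp [measure_univ] at h0
  -- events and indicators
  have hS_meas : MeasurableSet {q : EuclideanSpace ℝ (Fin D) × EuclideanSpace ℝ (Fin D) |
      dist q.1 q.2 ≤ r} :=
    (isClosed_le (continuous_fst.dist continuous_snd) continuous_const).measurableSet
  set A : Fin n₁ → Fin n₂ → Set Ω' := fun i j => {ω | ‖X i ω - Y j ω‖ ≤ r} with hA_def
  have hA : ∀ i j, MeasurableSet (A i j) := fun i j =>
    measurableSet_le ((hXmeas i).sub (hYmeas j)).norm measurable_const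
  set I : Fin n₁ → Fin n₂ → Ω' → ℝ := fun i j => (A i j).indicator (fun _ => (1:ℝ)) with hI_def
  have hI_meas : ∀ i j, Measurable (I i j) := fun i j =>
    measurable_const.indicator (hA i j)
  have hI_int : ∀ i j, Integrable (I i j) P := fun i j =>
    (integrable_indicator_iff (hA i j)).2
      (integrableOn_const (measure_ne_top _ _))
  have hII : ∀ i j k l, (fun ω => I i j ω * I k l ω)
      = (A i j ∩ A k l).indicator (fun _ => (1:ℝ)) := by
    intro i j k l
    funext ω
    by_cases h1 : ω ∈ A i j <;> by_cases h2 : ω ∈ A k l <;>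
      simp [hI_def, Set.indicator_apply, h1, h2]
  have hImul_int : ∀ i j k l, Integrable (fun ω => I i j ω * I k l ω) P := by
    intro i j k l
    rw [hII]
    exact (integrable_indicator_iff ((hA i j).inter (hA k l))).2
      (integrableOn_const (measure_ne_top _ _))
  have hIint_eq : ∀ i j, ∫ ω, I i j ω ∂P = (P (A i j)).toReal := fun i j =>
    integral_indicator_one (hA i j)
  have hIImul_eq : ∀ i j k l, ∫ ω, I i j ω * I k l ω ∂P = (P (A i j ∩ A k l)).toReal := by
    intro i j k l
    rw [hII]
    exact integral_indicator_one ((hA i j).inter (hA k l))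
  -- single-event bound
  have hp_le : ∀ i j, P (A i j) ≤ ENNReal.ofReal β := by
    intro i j
    have hpre : A i j = (fun ω => (X i ω, Y j ω)) ⁻¹'
        {q : EuclideanSpace ℝ (Fin D) × EuclideanSpace ℝ (Fin D) | dist q.1 q.2 ≤ r} := by
      ext ω; simp [hA_def, dist_eq_norm]
    have hind : IndepFun (X i) (Y j) P :=
      hindep.indepFun (show (Sum.inl i : Fin n₁ ⊕ Fin n₂) ≠ Sum.inr j by simp)
    rw [hpre, map_pair_apply_aux (hXmeas i) (hYmeas j) hind hS_meas, hX, hY,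
      Measure.prod_apply hS_meas]
    have hslice : ∀ x : EuclideanSpace ℝ (Fin D),
        (Prod.mk x ⁻¹' {q : EuclideanSpace ℝ (Fin D) × EuclideanSpace ℝ (Fin D) |
          dist q.1 q.2 ≤ r}) = Metric.closedBall x r := by
      intro x; ext y; simp [Metric.mem_closedBall, dist_comm]
    calc ∫⁻ x, ν (Prod.mk x ⁻¹' {q : EuclideanSpace ℝ (Fin D) × EuclideanSpace ℝ (Fin D) |
            dist q.1 q.2 ≤ r}) ∂μ
        ≤ ∫⁻ _, ENNReal.ofReal β ∂μ :=
          lintegral_mono fun x => by rw [hslice]; exact hν x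
      _ = ENNReal.ofReal β := by simp
  -- two events sharing the X index
  have hp2X : ∀ (i : Fin n₁) (j l : Fin n₂), j ≠ l →
      P (A i j ∩ A i l) ≤ ENNReal.ofReal (β * β) := by
    intro i j l hjl
    have hT : MeasurableSet {q : EuclideanSpace ℝ (Fin D) ×
        (EuclideanSpace ℝ (Fin D) × EuclideanSpace ℝ (Fin D)) |
        dist q.1 q.2.1 ≤ r ∧ dist q.1 q.2.2 ≤ r} :=
      (((measurable_fst.prodMk (measurable_fst.comp measurable_snd)) hS_meas).inter
        ((measurable_fst.prodMk (measurable_snd.comp measurable_snd)) hS_meas))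
    have hpre : A i j ∩ A i l = (fun ω => (X i ω, (Y j ω, Y l ω))) ⁻¹'
        {q : EuclideanSpace ℝ (Fin D) ×
          (EuclideanSpace ℝ (Fin D) × EuclideanSpace ℝ (Fin D)) |
          dist q.1 q.2.1 ≤ r ∧ dist q.1 q.2.2 ≤ r} := by
      ext ω; simp [hA_def, dist_eq_norm]
    have hYY : Measure.map (fun ω => (Y j ω, Y l ω)) P = ν.prod ν := by
      rw [(indepFun_iff_map_prod_eq_prod_map_map (hYmeas j).aemeasurable
        (hYmeas l).aemeasurable).1
        (hindep.indepFun (show (Sum.inr j : Fin n₁ ⊕ Fin n₂) ≠ Sum.inr l by simp [hjl])),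
        hY, hY]
    have hind : IndepFun (X i) (fun ω => (Y j ω, Y l ω)) P :=
      (hindep.indepFun_prodMk hWmeas (Sum.inr j) (Sum.inr l) (Sum.inl i)
        (by simp) (by simp)).symm
    rw [hpre, map_pair_apply_aux (hXmeas i) ((hYmeas j).prodMk (hYmeas l)) hind hT, hX, hYY,
      Measure.prod_apply hT]
    have hslice : ∀ x : EuclideanSpace ℝ (Fin D),
        (Prod.mk x ⁻¹' {q : EuclideanSpace ℝ (Fin D) ×
          (EuclideanSpace ℝ (Fin D) × EuclideanSpace ℝ (Fin D)) |
          dist q.1 q.2.1 ≤ r ∧ dist q.1 q.2.2 ≤ r})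
        = Metric.closedBall x r ×ˢ Metric.closedBall x r := by
      intro x; ext ⟨y, z⟩
      simp [Set.mem_prod, Metric.mem_closedBall, dist_comm]
    calc ∫⁻ x, (ν.prod ν) (Prod.mk x ⁻¹' {q : EuclideanSpace ℝ (Fin D) ×
            (EuclideanSpace ℝ (Fin D) × EuclideanSpace ℝ (Fin D)) |
            dist q.1 q.2.1 ≤ r ∧ dist q.1 q.2.2 ≤ r}) ∂μ
        ≤ ∫⁻ _, ENNReal.ofReal β * ENNReal.ofReal β ∂μ := by
          refine lintegral_mono fun x => ?_
          rw [hslice x, Measure.prod_prod]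
          exact mul_le_mul' (hν x) (hν x)
      _ = ENNReal.ofReal (β * β) := by simp [ENNReal.ofReal_mul hβ]
  -- two events sharing the Y index
  have hp2Y : ∀ (i k : Fin n₁) (j : Fin n₂), i ≠ k →
      P (A i j ∩ A k j) ≤ ENNReal.ofReal (β * β) := by
    intro i k j hik
    have hT : MeasurableSet {q : EuclideanSpace ℝ (Fin D) ×
        (EuclideanSpace ℝ (Fin D) × EuclideanSpace ℝ (Fin D)) |
        dist q.2.1 q.1 ≤ r ∧ dist q.2.2 q.1 ≤ r} :=
      ((((measurable_fst.comp measurable_snd).prodMk measurable_fst) hS_meas).inter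
        (((measurable_snd.comp measurable_snd).prodMk measurable_fst) hS_meas))
    have hpre : A i j ∩ A k j = (fun ω => (Y j ω, (X i ω, X k ω))) ⁻¹'
        {q : EuclideanSpace ℝ (Fin D) ×
          (EuclideanSpace ℝ (Fin D) × EuclideanSpace ℝ (Fin D)) |
          dist q.2.1 q.1 ≤ r ∧ dist q.2.2 q.1 ≤ r} := by
      ext ω; simp [hA_def, dist_eq_norm]
    have hXX : Measure.map (fun ω => (X i ω, X k ω)) P = μ.prod μ := by
      rw [(indepFun_iff_map_prod_eq_prod_map_map (hXmeas i).aemeasurable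
        (hXmeas k).aemeasurable).1
        (hindep.indepFun (show (Sum.inl i : Fin n₁ ⊕ Fin n₂) ≠ Sum.inl k by simp [hik])),
        hX, hX]
    have hind : IndepFun (Y j) (fun ω => (X i ω, X k ω)) P :=
      (hindep.indepFun_prodMk hWmeas (Sum.inl i) (Sum.inl k) (Sum.inr j)
        (by simp) (by simp)).symm
    rw [hpre, map_pair_apply_aux (hYmeas j) ((hXmeas i).prodMk (hXmeas k)) hind hT, hY, hXX,
      Measure.prod_apply hT]
    have hslice : ∀ y : EuclideanSpace ℝ (Fin D),
        (Prod.mk y ⁻¹' {q : EuclideanSpace ℝ (Fin D) ×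
          (EuclideanSpace ℝ (Fin D) × EuclideanSpace ℝ (Fin D)) |
          dist q.2.1 q.1 ≤ r ∧ dist q.2.2 q.1 ≤ r})
        = Metric.closedBall y r ×ˢ Metric.closedBall y r := by
      intro y; ext ⟨x, x'⟩
      simp [Set.mem_prod, Metric.mem_closedBall]
    calc ∫⁻ y, (μ.prod μ) (Prod.mk y ⁻¹' {q : EuclideanSpace ℝ (Fin D) ×
            (EuclideanSpace ℝ (Fin D) × EuclideanSpace ℝ (Fin D)) |
            dist q.2.1 q.1 ≤ r ∧ dist q.2.2 q.1 ≤ r}) ∂ν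
        ≤ ∫⁻ _, ENNReal.ofReal β * ENNReal.ofReal β ∂ν := by
          refine lintegral_mono fun y => ?_
          rw [hslice y, Measure.prod_prod]
          exact mul_le_mul' (hμ y) (hμ y)
      _ = ENNReal.ofReal (β * β) := by simp [ENNReal.ofReal_mul hβ]
  -- cross independence
  have hcross : ∀ (i : Fin n₁) (j : Fin n₂) (k : Fin n₁) (l : Fin n₂), i ≠ k → j ≠ l →
      ∫ ω, I i j ω * I k l ω ∂P = (∫ ω, I i j ω ∂P) * ∫ ω, I k l ω ∂P := by
    intro i j k l hik hjl
    have hpair : IndepFun (fun ω => (X i ω, Y j ω)) (fun ω => (X k ω, Y l ω)) P :=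
      hindep.indepFun_prodMk_prodMk hWmeas (Sum.inl i) (Sum.inr j) (Sum.inl k) (Sum.inr l)
        (by simp [hik]) (by simp) (by simp) (by simp [hjl])
    set φ : EuclideanSpace ℝ (Fin D) × EuclideanSpace ℝ (Fin D) → ℝ :=
      fun q => if dist q.1 q.2 ≤ r then (1:ℝ) else 0 with hφ_def
    have hφ : Measurable φ := Measurable.ite hS_meas measurable_const measurable_const
    have hIeq : ∀ (a : Fin n₁) (b : Fin n₂),
        I a b = φ ∘ (fun ω => (X a ω, Y b ω)) := by
      intro a b
      funext ω
      simp [hI_def, hφ_def, Set.indicator_apply, hA_def, dist_eq_norm, Function.comp]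
    have hcomp : IndepFun (I i j) (I k l) P := by
      rw [hIeq i j, hIeq k l]
      exact hpair.comp hφ hφ
    exact hcomp.integral_fun_mul_eq_mul_integral (hI_int i j).aestronglyMeasurable (hI_int k l).aestronglyMeasurable
  -- rewrite Z as a sum over pairs
  set p : Fin n₁ × Fin n₂ → ℝ := fun q => ∫ ω, I q.1 q.2 ω ∂P with hp_def
  have hpP : ∀ q : Fin n₁ × Fin n₂, p q = (P (A q.1 q.2)).toReal := fun q =>
    hIint_eq q.1 q.2
  have hp_nonneg : ∀ q, 0 ≤ p q := by
    intro q; rw [hpP]; exact ENNReal.toReal_nonneg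
  have hp_leβ : ∀ q, p q ≤ β := by
    intro q; rw [hpP]
    exact ENNReal.toReal_le_of_le_ofReal hβ (hp_le _ _)
  have hZsum : Z = fun ω => ∑ q : Fin n₁ × Fin n₂, I q.1 q.2 ω := by
    funext ω
    rw [hZ, Fintype.sum_prod_type]
    refine Finset.sum_congr rfl fun i _ => Finset.sum_congr rfl fun j _ => ?_
    simp [hI_def, Set.indicator_apply, hA_def]
  have hI01 : ∀ (i : Fin n₁) (j : Fin n₂) ω, 0 ≤ I i j ω ∧ I i j ω ≤ 1 := by
    intro i j ω
    by_cases h : ω ∈ A i j <;> simp [hI_def, Set.indicator_apply, h]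
  have hZmeas : Measurable Z := by
    rw [hZsum]
    exact Finset.measurable_sum _ fun q _ => hI_meas q.1 q.2
  have hZbound : ∀ ω, 0 ≤ Z ω ∧ Z ω ≤ (n₁ : ℝ) * n₂ := by
    intro ω
    rw [hZsum]
    constructor
    · exact Finset.sum_nonneg fun q _ => (hI01 q.1 q.2 ω).1
    · calc ∑ q : Fin n₁ × Fin n₂, I q.1 q.2 ω ≤ ∑ _q : Fin n₁ × Fin n₂, (1:ℝ) :=
          Finset.sum_le_sum fun q _ => (hI01 q.1 q.2 ω).2
        _ = (n₁ : ℝ) * n₂ := by simp [Finset.card_univ]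
  have hZm : MemLp Z 2 P := by
    refine MemLp.of_bound hZmeas.aestronglyMeasurable ((n₁ : ℝ) * n₂)
      (Filter.Eventually.of_forall fun ω => ?_)
    rw [Real.norm_eq_abs, abs_le]
    have := hZbound ω
    constructor <;> nlinarith [this.1, this.2]
  have hEZ : ∫ ω, Z ω ∂P = ∑ q : Fin n₁ × Fin n₂, p q := by
    rw [hZsum]
    exact integral_finset_sum _ fun q _ => hI_int q.1 q.2
  have hZsq : ∫ ω, (Z ω)^2 ∂P = ∑ q : Fin n₁ × Fin n₂, ∑ q' : Fin n₁ × Fin n₂,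
      ∫ ω, I q.1 q.2 ω * I q'.1 q'.2 ω ∂P := by
    have h1 : ∀ ω, (Z ω)^2 = ∑ q : Fin n₁ × Fin n₂, ∑ q' : Fin n₁ × Fin n₂,
        I q.1 q.2 ω * I q'.1 q'.2 ω := by
      intro ω
      rw [hZsum, sq, Finset.sum_mul_sum]
    simp_rw [h1]
    rw [integral_finset_sum _ fun q _ =>
      integrable_finset_sum _ fun q' _ => hImul_int q.1 q.2 q'.1 q'.2]
    exact Finset.sum_congr rfl fun q _ =>
      integral_finset_sum _ fun q' _ => hImul_int q.1 q.2 q'.1 q'.2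
  -- variance bound
  have hterm : ∀ q q' : Fin n₁ × Fin n₂,
      (∫ ω, I q.1 q.2 ω * I q'.1 q'.2 ω ∂P) - p q * p q'
      ≤ (if q = q' then β else 0) + (if q.1 = q'.1 then β^2 else 0)
        + (if q.2 = q'.2 then β^2 else 0) := by
    intro q q'
    have hpp : 0 ≤ p q * p q' := mul_nonneg (hp_nonneg q) (hp_nonneg q')
    by_cases h1 : q.1 = q'.1
    · by_cases h2 : q.2 = q'.2
      · have hqq : q = q' := Prod.ext h1 h2
        subst hqq
        have he : ∫ ω, I q.1 q.2 ω * I q.1 q.2 ω ∂P ≤ β := by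
          rw [hIImul_eq, Set.inter_self]
          exact ENNReal.toReal_le_of_le_ofReal hβ (hp_le _ _)
        rw [if_pos rfl, if_pos rfl, if_pos rfl]
        nlinarith [sq_nonneg β]
      · have he : ∫ ω, I q.1 q.2 ω * I q'.1 q'.2 ω ∂P ≤ β^2 := by
          rw [hIImul_eq, sq]
          have := hp2X q.1 q.2 q'.2 h2
          rw [h1]
          exact ENNReal.toReal_le_of_le_ofReal (mul_nonneg hβ hβ) (by rw [← h1]; exact this)
        have hq : q ≠ q' := fun h => h2 (by rw [h])
        simp only [if_neg hq, if_pos h1, if_neg h2]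
        nlinarith [sq_nonneg β]
    · by_cases h2 : q.2 = q'.2
      · have he : ∫ ω, I q.1 q.2 ω * I q'.1 q'.2 ω ∂P ≤ β^2 := by
          rw [hIImul_eq, sq]
          rw [h2]
          exact ENNReal.toReal_le_of_le_ofReal (mul_nonneg hβ hβ)
            (hp2Y q.1 q'.1 q'.2 h1)
        have hq : q ≠ q' := fun h => h1 (by rw [h])
        simp only [if_neg hq, if_neg h1, if_pos h2]
        nlinarith [sq_nonneg β]
      · have he := hcross q.1 q.2 q'.1 q'.2 h1 h2
        have hq : q ≠ q' := fun h => h1 (by rw [h])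
        simp only [if_neg hq, if_neg h1, if_neg h2]
        rw [he]
        simp [hp_def]
  have hVar : variance Z P ≤ β * (n₁ * n₂) + β^2 * (n₁ * n₂ * n₂) + β^2 * (n₁ * n₁ * n₂) := by
    have hvd := variance_eq_sub hZm
    have hmom : P[Z ^ 2] = ∫ ω, (Z ω)^2 ∂P := by
      refine integral_congr_ae (Filter.Eventually.of_forall fun ω => ?_)
      simp
    rw [hvd, hmom, hZsq, hEZ, sq, Finset.sum_mul_sum, ← Finset.sum_sub_distrib]
    simp_rw [← Finset.sum_sub_distrib]
    calc ∑ q : Fin n₁ × Fin n₂, ∑ q' : Fin n₁ × Fin n₂,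
          ((∫ ω, I q.1 q.2 ω * I q'.1 q'.2 ω ∂P) - p q * p q')
        ≤ ∑ q : Fin n₁ × Fin n₂, ∑ q' : Fin n₁ × Fin n₂,
          ((if q = q' then β else 0) + (if q.1 = q'.1 then β^2 else 0)
            + (if q.2 = q'.2 then β^2 else 0)) :=
          Finset.sum_le_sum fun q _ => Finset.sum_le_sum fun q' _ => hterm q q'
      _ = β * (n₁ * n₂) + β^2 * (n₁ * n₂ * n₂) + β^2 * (n₁ * n₁ * n₂) := by
          simp_rw [Finset.sum_add_distrib]
          have hc1 : ∑ q : Fin n₁ × Fin n₂, ∑ q' : Fin n₁ × Fin n₂,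
              (if q = q' then β else 0) = (n₁ : ℝ) * n₂ * β := by
            simp [Finset.sum_ite_eq, Finset.card_univ, mul_assoc]
          have hc2 : ∑ q : Fin n₁ × Fin n₂, ∑ q' : Fin n₁ × Fin n₂,
              (if q.1 = q'.1 then β^2 else 0) = (n₁ : ℝ) * n₂ * n₂ * β^2 := by
            have h : ∀ q : Fin n₁ × Fin n₂, ∑ q' : Fin n₁ × Fin n₂,
                (if q.1 = q'.1 then β^2 else 0) = (n₂ : ℝ) * β^2 := by
              intro q
              rw [Fintype.sum_prod_type_right]
              simp [Finset.sum_ite_eq, Finset.card_univ, mul_comm]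
            rw [Finset.sum_congr rfl fun q _ => h q]
            simp [Finset.card_univ]
            ring
          have hc3 : ∑ q : Fin n₁ × Fin n₂, ∑ q' : Fin n₁ × Fin n₂,
              (if q.2 = q'.2 then β^2 else 0) = (n₁ : ℝ) * n₁ * n₂ * β^2 := by
            simp [Fintype.sum_prod_type, Finset.sum_ite_eq, Finset.card_univ, mul_assoc]
            ring_nf
            tauto
          rw [hc1, hc2, hc3]
          ring
  -- expectation bound
  have hm_le : ∫ ω, Z ω ∂P ≤ β * n₁ * n₂ := by
    rw [hEZ]
    calc ∑ q : Fin n₁ × Fin n₂, p q ≤ ∑ _q : Fin n₁ × Fin n₂, β :=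
        Finset.sum_le_sum fun q _ => hp_leβ q
      _ = β * n₁ * n₂ := by simp [Finset.card_univ]; ring
  have hm_nonneg : 0 ≤ ∫ ω, Z ω ∂P := by
    rw [hEZ]; exact Finset.sum_nonneg fun q _ => hp_nonneg q
  -- final Chebyshev step
  have hn₁' : (1:ℝ) ≤ n₁ := by exact_mod_cast hn₁
  have hn₂' : (1:ℝ) ≤ n₂ := by exact_mod_cast hn₂
  set m := ∫ ω, Z ω ∂P with hm_def
  set N : ℝ := (n₁ : ℝ) * n₂ * ((n₁ : ℝ) + n₂) with hN_def
  have hN_nonneg : 0 ≤ N := by positivity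
  set s1 := Real.sqrt (β * n₁ * n₂) with hs1_def
  set s2 := Real.sqrt N with hs2_def
  have hs1_sq : s1 ^ 2 = β * n₁ * n₂ := Real.sq_sqrt (by positivity)
  have hs2_sq : s2 ^ 2 = N := Real.sq_sqrt hN_nonneg
  have hs1_nonneg : 0 ≤ s1 := Real.sqrt_nonneg _
  have hs2_nonneg : 0 ≤ s2 := Real.sqrt_nonneg _
  set a := 2 * (β * (n₁:ℝ) * n₂ + t * s1 + t * β * s2) with ha_def
  have hB_pos : 0 < β * (n₁:ℝ) * n₂ :=
    mul_pos (mul_pos hβpos (by linarith : (0:ℝ) < n₁)) (by linarith : (0:ℝ) < n₂)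
  have ha : a = 2 * (β * (n₁:ℝ) * n₂ + t * s1 + t * β * s2) := ha_def
  have hts1 : 0 ≤ t * s1 := mul_nonneg ht.le hs1_nonneg
  have hts2 : 0 ≤ t * β * s2 := mul_nonneg (mul_nonneg ht.le hβ) hs2_nonneg
  have hc : 0 < a - m := by linarith
  have hVar_nonneg : 0 ≤ variance Z P := variance_nonneg Z P
  have hVarN : variance Z P ≤ β * ((n₁:ℝ) * n₂) + β^2 * N := by
    have : β * ((n₁:ℝ) * n₂) + β^2 * N
        = β * ((n₁:ℝ) * n₂) + β^2 * ((n₁:ℝ) * n₂ * n₂) + β^2 * ((n₁:ℝ) * n₁ * n₂) := by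
      rw [hN_def]; ring
    rw [this]
    exact hVar
  have hfinal : variance Z P / (a - m)^2 ≤ 1 / t^2 := by
    rw [div_le_div_iff₀ (by positivity) (by positivity)]
    have h1 : 2*t*s1 + 2*t*β*s2 ≤ a - m := by linarith
    have h2 : (0:ℝ) ≤ 2*t*s1 + 2*t*β*s2 := by positivity
    have h3 : (2*t*s1 + 2*t*β*s2)^2 ≤ (a - m)^2 := pow_le_pow_left₀ h2 h1 2
    have e1 : (2*t*s1 + 2*t*β*s2)^2
        = 4*t^2*s1^2 + 8*(t^2*β*(s1*s2)) + 4*(t^2*β^2*s2^2) := by ring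
    rw [hs1_sq, hs2_sq] at e1
    have e2 : variance Z P * t^2 ≤ (β * ((n₁:ℝ) * n₂) + β^2 * N) * t^2 :=
      mul_le_mul_of_nonneg_right hVarN (sq_nonneg t)
    have m1 : 0 ≤ t^2 * (β * (n₁:ℝ) * n₂) := by positivity
    have m2 : 0 ≤ t^2 * β^2 * N := by positivity
    have m3 : 0 ≤ t^2 * β * (s1 * s2) := by positivity
    have e3 : (β * ((n₁:ℝ) * n₂) + β^2 * N) * t^2
        ≤ 4*t^2*(β * (n₁:ℝ) * n₂) + 8*(t^2*β*(s1*s2)) + 4*(t^2*β^2*N) := by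
      linarith only [m1, m2, m3]
    have h5 : 4*t^2*(β * (n₁:ℝ) * n₂) + 8*(t^2*β*(s1*s2)) + 4*(t^2*β^2*N) ≤ (a - m)^2 := by
      rw [← e1]; exact h3
    linarith only [e2, e3, h5]
  calc P {ω | Z ω ≥ a} ≤ P {ω | a - m ≤ |Z ω - m|} := by
        refine measure_mono fun ω hω => ?_
        simp only [Set.mem_setOf_eq] at hω ⊢
        have : a - m ≤ Z ω - m := by linarith
        exact this.trans (le_abs_self _)
    _ ≤ ENNReal.ofReal (variance Z P / (a - m)^2) := meas_ge_le_variance_div_sq hZm hc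
    _ ≤ ENNReal.ofReal (1 / t^2) := ENNReal.ofReal_le_ofReal hfinal
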